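/- Let κ ∈ ℝ and let x, y ∈ ℝ³ be nonzero vectors with |x||y| + ⟨x,y⟩ > 0 (so that the segment from x to y does not pass through the origin). Then the AVF discrete gradient of the Coulomb–Kepler potential V(z) = −κ/|z|, whose gradient is ∇V(z) = κ z/|z|³, is given by the closed-form expression ∫₀¹ κ ((1−t)x + t y)/|(1−t)x + t y|³ dt = κ ( x/|x| + y/|y| ) / ( |x||y| + ⟨x,y⟩ ). -/

import Mathlib

open MeasureTheory
open scoped RealInnerProductSpace


lemma alg_e (κ A B b t n : ℝ) (hn : 0 < n)
    (hg : 0 < A * n + ((1-t)*A^2 + t*b))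
    (hn2 : n^2 = (1-t)^2*A^2 + 2*t*(1-t)*b + t^2*B^2) :
    κ * t / n^3 =
      (κ * (2*t) * ((A * n + ((1-t)*A^2 + t*b)) * n) -
        κ * t^2 * ((A * ((-2*(1-t)*A^2 + (2-4*t)*b + 2*t*B^2) / (2*n)) + (-A^2 + b)) * n +
          (A * n + ((1-t)*A^2 + t*b)) * ((-2*(1-t)*A^2 + (2-4*t)*b + 2*t*B^2) / (2*n)))) /
      ((A * n + ((1-t)*A^2 + t*b)) * n)^2 := by
  rw [div_eq_div_iff (by positivity) (by positivity)]
  field_simp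
  linear_combination (κ*t*(-4*A*n + 2*A^2 - 4*(A^2*(1-t)+t*b)) + κ*t^2*(2*b - 2*A^2)) * hn2


lemma aux_e (κ A B b t : ℝ)
    (hq : 0 < (1-t)^2*A^2 + 2*t*(1-t)*b + t^2*B^2)
    (hg : 0 < A * Real.sqrt ((1-t)^2*A^2 + 2*t*(1-t)*b + t^2*B^2) + ((1-t)*A^2 + t*b)) :
    HasDerivAt (fun s => κ * s^2 /
      ((A * Real.sqrt ((1-s)^2*A^2 + 2*s*(1-s)*b + s^2*B^2) + ((1-s)*A^2 + s*b)) *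
        Real.sqrt ((1-s)^2*A^2 + 2*s*(1-s)*b + s^2*B^2)))
      (κ * t / Real.sqrt ((1-t)^2*A^2 + 2*t*(1-t)*b + t^2*B^2) ^ 3) t := by
  have hn : 0 < Real.sqrt ((1-t)^2*A^2 + 2*t*(1-t)*b + t^2*B^2) := Real.sqrt_pos.2 hq
  set n := Real.sqrt ((1-t)^2*A^2 + 2*t*(1-t)*b + t^2*B^2) with hndef
  have hn2 : n^2 = (1-t)^2*A^2 + 2*t*(1-t)*b + t^2*B^2 := Real.sq_sqrt hq.le
  have h1 : HasDerivAt (fun s : ℝ => 1 - s) (-1) t := (hasDerivAt_id t).const_sub 1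
  have hq' : HasDerivAt (fun s : ℝ => (1-s)^2*A^2 + 2*s*(1-s)*b + s^2*B^2)
      (-2*(1-t)*A^2 + (2-4*t)*b + 2*t*B^2) t := by
    have h := (((h1.pow 2).mul_const (A^2)).add
        ((((hasDerivAt_id t).mul h1).const_mul 2).mul_const b)).add
        (((hasDerivAt_id t).pow 2).mul_const (B^2))
    convert h using 1
    · rfl
    · rfl
    · ext s; simp only [Pi.add_apply, Pi.mul_apply, Pi.pow_apply, id_eq]; ring
    · simp only [id_eq]; push_cast; ring
  have hn' : HasDerivAt (fun s : ℝ => Real.sqrt ((1-s)^2*A^2 + 2*s*(1-s)*b + s^2*B^2))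
      ((-2*(1-t)*A^2 + (2-4*t)*b + 2*t*B^2) / (2*n)) t := hq'.sqrt hq.ne'
  have hg' : HasDerivAt (fun s : ℝ =>
      A * Real.sqrt ((1-s)^2*A^2 + 2*s*(1-s)*b + s^2*B^2) + ((1-s)*A^2 + s*b))
      (A * ((-2*(1-t)*A^2 + (2-4*t)*b + 2*t*B^2) / (2*n)) + (-A^2 + b)) t := by
    refine (hn'.const_mul A).add ?_
    have h := ((h1.mul_const (A^2)).add ((hasDerivAt_id t).mul_const b))
    convert h using 1
    · rfl
    ring
  have hden : HasDerivAt (fun s : ℝ =>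
      (A * Real.sqrt ((1-s)^2*A^2 + 2*s*(1-s)*b + s^2*B^2) + ((1-s)*A^2 + s*b)) *
        Real.sqrt ((1-s)^2*A^2 + 2*s*(1-s)*b + s^2*B^2))
      ((A * ((-2*(1-t)*A^2 + (2-4*t)*b + 2*t*B^2) / (2*n)) + (-A^2 + b)) * n +
        (A * n + ((1-t)*A^2 + t*b)) * ((-2*(1-t)*A^2 + (2-4*t)*b + 2*t*B^2) / (2*n))) t :=
    hg'.mul hn'
  have hnum : HasDerivAt (fun s : ℝ => κ * s^2) (κ * (2*t)) t := by
    have := (hasDerivAt_pow 2 t).const_mul κ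
    simpa using this
  have hdenne : (A * n + ((1-t)*A^2 + t*b)) * n ≠ 0 := (mul_pos hg hn).ne'
  have h := hnum.div hden hdenne
  convert h using 1
  · rfl
  · rfl
  · rfl
  rw [← hndef]
  exact alg_e κ A B b t n hn hg hn2

lemma aux_c (κ A B b t : ℝ) (hA : 0 < A)
    (hq : 0 < (1-t)^2*A^2 + 2*t*(1-t)*b + t^2*B^2)
    (hg : 0 < A * Real.sqrt ((1-t)^2*A^2 + 2*t*(1-t)*b + t^2*B^2) + ((1-t)*A^2 + t*b)) :
    HasDerivAt (fun s => κ * s * (A⁻¹ + (1-s) / Real.sqrt ((1-s)^2*A^2 + 2*s*(1-s)*b + s^2*B^2)) /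
      (A * Real.sqrt ((1-s)^2*A^2 + 2*s*(1-s)*b + s^2*B^2) + ((1-s)*A^2 + s*b)))
      (κ * (1-t) / Real.sqrt ((1-t)^2*A^2 + 2*t*(1-t)*b + t^2*B^2) ^ 3) t := by
  have hn : 0 < Real.sqrt ((1-t)^2*A^2 + 2*t*(1-t)*b + t^2*B^2) := Real.sqrt_pos.2 hq
  set n := Real.sqrt ((1-t)^2*A^2 + 2*t*(1-t)*b + t^2*B^2) with hndef
  have hn2 : n^2 = (1-t)^2*A^2 + 2*t*(1-t)*b + t^2*B^2 := Real.sq_sqrt hq.le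
  have h1 : HasDerivAt (fun s : ℝ => 1 - s) (-1) t := (hasDerivAt_id t).const_sub 1
  have hq' : HasDerivAt (fun s : ℝ => (1-s)^2*A^2 + 2*s*(1-s)*b + s^2*B^2)
      (-2*(1-t)*A^2 + (2-4*t)*b + 2*t*B^2) t := by
    have h := (((h1.pow 2).mul_const (A^2)).add
        ((((hasDerivAt_id t).mul h1).const_mul 2).mul_const b)).add
        (((hasDerivAt_id t).pow 2).mul_const (B^2))
    convert h using 1
    · rfl
    · rfl
    · ext s; simp only [Pi.add_apply, Pi.mul_apply, Pi.pow_apply, id_eq]; ring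
    · simp only [id_eq]; push_cast; ring
  have hn' : HasDerivAt (fun s : ℝ => Real.sqrt ((1-s)^2*A^2 + 2*s*(1-s)*b + s^2*B^2))
      ((-2*(1-t)*A^2 + (2-4*t)*b + 2*t*B^2) / (2*n)) t := hq'.sqrt hq.ne'
  have hg' : HasDerivAt (fun s : ℝ =>
      A * Real.sqrt ((1-s)^2*A^2 + 2*s*(1-s)*b + s^2*B^2) + ((1-s)*A^2 + s*b))
      (A * ((-2*(1-t)*A^2 + (2-4*t)*b + 2*t*B^2) / (2*n)) + (-A^2 + b)) t := by
    refine (hn'.const_mul A).add ?_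
    have h := ((h1.mul_const (A^2)).add ((hasDerivAt_id t).mul_const b))
    convert h using 1
    · rfl
    ring
  have hfrac : HasDerivAt (fun s : ℝ => (1-s) / Real.sqrt ((1-s)^2*A^2 + 2*s*(1-s)*b + s^2*B^2))
      ((-1 * n - (1-t) * ((-2*(1-t)*A^2 + (2-4*t)*b + 2*t*B^2) / (2*n))) / n^2) t :=
    h1.div hn' hn.ne'
  have hlin : HasDerivAt (fun s : ℝ => κ * s) (κ * 1) t := (hasDerivAt_id t).const_mul κ
  have hnum : HasDerivAt (fun s : ℝ =>
      κ * s * (A⁻¹ + (1-s) / Real.sqrt ((1-s)^2*A^2 + 2*s*(1-s)*b + s^2*B^2)))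
      (κ * 1 * (A⁻¹ + (1-t)/n) +
        κ * t * ((-1 * n - (1-t) * ((-2*(1-t)*A^2 + (2-4*t)*b + 2*t*B^2) / (2*n))) / n^2)) t :=
    hlin.mul (hfrac.const_add A⁻¹)
  have h := hnum.div hg' hg.ne'
  convert h using 1
  · rfl
  · rfl
  · rfl
  rw [← hndef]
  rw [div_eq_div_iff (by positivity) (by positivity)]
  field_simp
  linear_combination (-2*κ*A*n^2 + 4*κ*t*A^2*n - 4*κ*A^2*n - 2*κ*t*A*b + 2*κ*t^2*A*b -
    2*κ*A^3 + 4*κ*t*A^3 - 2*κ*t^2*A^3) * hn2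

/-- Closed-form expression for the AVF discrete gradient of the
Coulomb–Kepler potential `V(z) = −κ/|z|`, with `∇V(z) = κ z/|z|³`: for nonzero
`x, y ∈ ℝ³` with `|x||y| + ⟨x,y⟩ > 0`,
`∫₀¹ κ((1−t)x + ty)/|(1−t)x + ty|³ dt = κ(x/|x| + y/|y|)/(|x||y| + ⟨x,y⟩)`. -/
theorem avf_discrete_gradient_kepler
    (κ : ℝ) (x y : EuclideanSpace ℝ (Fin 3))
    (hx : x ≠ 0) (hy : y ≠ 0)
    (hxy : 0 < ‖x‖ * ‖y‖ + ⟪x, y⟫) :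
    (∫ t in (0:ℝ)..1,
        (κ / ‖(1 - t) • x + t • y‖ ^ 3) • ((1 - t) • x + t • y)) =
      (κ / (‖x‖ * ‖y‖ + ⟪x, y⟫)) • (‖x‖⁻¹ • x + ‖y‖⁻¹ • y) := by
  have hA : 0 < ‖x‖ := norm_pos_iff.2 hx
  have hB : 0 < ‖y‖ := norm_pos_iff.2 hy
  have hble : ⟪x, y⟫ ≤ ‖x‖ * ‖y‖ := real_inner_le_norm x y
  set bxy := ⟪x, y⟫ with hbdef
  -- norm as sqrt of quadratic
  have hq_eq : ∀ t : ℝ, ‖(1 - t) • x + t • y‖ =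
      Real.sqrt ((1-t)^2*‖x‖^2 + 2*t*(1-t)*bxy + t^2*‖y‖^2) := by
    intro t
    rw [norm_eq_sqrt_real_inner]
    congr 1
    simp only [inner_add_left, inner_add_right, real_inner_smul_left, real_inner_smul_right,
      real_inner_self_eq_norm_sq, real_inner_comm y x, norm_smul, mul_pow, Real.norm_eq_abs,
      sq_abs]
    rw [real_inner_comm x y, ← hbdef]
    ring
  -- positivity of the quadratic on [0,1]
  have hqpos : ∀ t ∈ Set.Icc (0:ℝ) 1,
      0 < (1-t)^2*‖x‖^2 + 2*t*(1-t)*bxy + t^2*‖y‖^2 := by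
    rintro t ⟨h0, h1⟩
    rcases eq_or_lt_of_le h0 with h | h
    · rw [← h]; norm_num; positivity
    · rcases eq_or_lt_of_le h1 with h' | h'
      · rw [h']; norm_num; positivity
      · nlinarith [sq_nonneg ((1-t)*‖x‖ - t*‖y‖), mul_pos (mul_pos h (sub_pos.2 h')) hxy]
  -- positivity of the denominator g on [0,1]
  have hgpos : ∀ t ∈ Set.Icc (0:ℝ) 1,
      0 < ‖x‖ * Real.sqrt ((1-t)^2*‖x‖^2 + 2*t*(1-t)*bxy + t^2*‖y‖^2)
        + ((1-t)*‖x‖^2 + t*bxy) := by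
    intro t ht
    have hqt := hqpos t ht
    obtain ⟨h0, h1⟩ := ht
    have hn : 0 < Real.sqrt ((1-t)^2*‖x‖^2 + 2*t*(1-t)*bxy + t^2*‖y‖^2) :=
      Real.sqrt_pos.2 hqt
    have hn2 : (Real.sqrt ((1-t)^2*‖x‖^2 + 2*t*(1-t)*bxy + t^2*‖y‖^2))^2 =
        (1-t)^2*‖x‖^2 + 2*t*(1-t)*bxy + t^2*‖y‖^2 := Real.sq_sqrt hqt.le
    set N := Real.sqrt ((1-t)^2*‖x‖^2 + 2*t*(1-t)*bxy + t^2*‖y‖^2) with hNdef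
    rcases le_or_gt 0 ((1-t)*‖x‖^2 + t*bxy) with hP | hP
    · nlinarith [mul_pos hA hn]
    · have h2 : 0 < ‖x‖*N - ((1-t)*‖x‖^2 + t*bxy) := by nlinarith [mul_pos hA hn]
      have htb : t*bxy < 0 := by
        nlinarith [mul_nonneg (sub_nonneg.2 h1) (sq_nonneg ‖x‖)]
      rcases h0.lt_or_eq with ht0 | ht0
      swap
      · rw [← ht0] at htb; simp at htb
      have hb0 : bxy < 0 := by
        by_contra hcon; push_neg at hcon; nlinarith [mul_nonneg ht0.le hcon]
      have hABb : 0 < ‖x‖^2*‖y‖^2 - bxy^2 := by nlinarith [mul_pos hA hB]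
      have hn2' : ‖x‖^2 * N^2 = ‖x‖^2 * ((1-t)^2*‖x‖^2 + 2*t*(1-t)*bxy + t^2*‖y‖^2) := by
        rw [hn2]
      nlinarith [mul_pos (mul_pos ht0 ht0) hABb, h2, hn2']
  -- continuity / integrability of the integrand
  have hzc : Continuous (fun t : ℝ => (1 - t) • x + t • y) := by fun_prop
  have hnormpos : ∀ t ∈ Set.Icc (0:ℝ) 1, 0 < ‖(1 - t) • x + t • y‖ := by
    intro t ht; rw [hq_eq]; exact Real.sqrt_pos.2 (hqpos t ht)
  have hint : IntervalIntegrable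
      (fun t : ℝ => (κ / ‖(1 - t) • x + t • y‖ ^ 3) • ((1 - t) • x + t • y)) volume 0 1 := by
    apply ContinuousOn.intervalIntegrable
    rw [Set.uIcc_of_le zero_le_one]
    exact (ContinuousOn.div continuousOn_const ((hzc.norm.pow 3).continuousOn)
      (fun t ht => (pow_pos (hnormpos t ht) 3).ne')).smul hzc.continuousOn
  -- the antiderivative and the FTC
  have hderiv : ∀ t ∈ Set.uIcc (0:ℝ) 1,
      HasDerivAt (fun s : ℝ =>
        (κ * s * ((‖x‖)⁻¹ + (1-s) / Real.sqrt ((1-s)^2*‖x‖^2 + 2*s*(1-s)*bxy + s^2*‖y‖^2)) /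
          (‖x‖ * Real.sqrt ((1-s)^2*‖x‖^2 + 2*s*(1-s)*bxy + s^2*‖y‖^2)
            + ((1-s)*‖x‖^2 + s*bxy))) • x +
        (κ * s^2 /
          ((‖x‖ * Real.sqrt ((1-s)^2*‖x‖^2 + 2*s*(1-s)*bxy + s^2*‖y‖^2)
            + ((1-s)*‖x‖^2 + s*bxy)) *
            Real.sqrt ((1-s)^2*‖x‖^2 + 2*s*(1-s)*bxy + s^2*‖y‖^2))) • y)
        ((κ / ‖(1 - t) • x + t • y‖ ^ 3) • ((1 - t) • x + t • y)) t := by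
    intro t ht
    rw [Set.uIcc_of_le zero_le_one] at ht
    have h := ((aux_c κ ‖x‖ ‖y‖ bxy t hA (hqpos t ht) (hgpos t ht)).smul_const x).add
      ((aux_e κ ‖x‖ ‖y‖ bxy t (hqpos t ht) (hgpos t ht)).smul_const y)
    convert h using 1
    · rfl
    · rfl
    · rfl
    · rfl
    rw [hq_eq t]
    match_scalars <;> ring
  rw [intervalIntegral.integral_eq_sub_of_hasDerivAt hderiv hint]
  norm_num
  match_scalars
  · ring
  · simp only [div_eq_mul_inv, mul_inv, mul_one]
    ring
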